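/- Let η_1, …, η_{K−1} ≥ 0. For (w, V) define the worst-case harvested power WHP(w, V) = inf over all (Δg_1, …, Δg_{K−1}) with Δg_kᴴ Δg_k ≤ ε_k² of Σ_{k=1}^{K−1} η_k (ĝ_k + Δg_k)ᴴ (w wᴴ + V)(ĝ_k + Δg_k), and for (W̄, V̄, ξ) define WHP'(W̄, V̄) analogously with w wᴴ + V replaced by W̄ + V̄. Then the supremum over (w, V) ∈ F of the worst-case energy harvesting efficiency WHP(w, V)/(‖w‖² + Tr(V)) equals the supremum over (W̄, V̄, ξ) ∈ F' of WHP'(W̄, V̄); moreover, for every (w, V) ∈ F the point (ξ₀ w wᴴ, ξ₀ V, ξ₀) with ξ₀ = 1/(‖w‖² + Tr(V)) lies in F' and satisfies WHP(w, V)/(‖w‖² + Tr(V)) = WHP'(ξ₀ w wᴴ, ξ₀ V). -/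

import Mathlib

open Matrix
open scoped ComplexOrder

open scoped Pointwise

lemma vecMulVec_mulVec' {n : Type*} [Fintype n] (w v x : n → ℂ) :
    vecMulVec w v *ᵥ x = (v ⬝ᵥ x) • w := by
  ext i
  simp [mulVec, vecMulVec_apply, dotProduct, Finset.mul_sum, mul_assoc, mul_comm, mul_left_comm]

lemma quad_vecMulVec {n : Type*} [Fintype n] (w x : n → ℂ) :
    star x ⬝ᵥ vecMulVec w (star w) *ᵥ x
      = Complex.normSq (star x ⬝ᵥ w) := by
  rw [vecMulVec_mulVec', dotProduct_smul]
  rw [smul_eq_mul, mul_comm, ← Complex.mul_conj]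
  congr 1
  simp [dotProduct, Complex.conj_conj, map_sum, mul_comm]

lemma trace_vecMulVec' {n : Type*} [Fintype n] (w v : n → ℂ) :
    (vecMulVec w v).trace = v ⬝ᵥ w := by
  simp [trace, Matrix.diag, vecMulVec_apply, dotProduct, mul_comm]

lemma trace_mul_vecMulVec {n : Type*} [Fintype n] (A : Matrix n n ℂ) (w v : n → ℂ) :
    (A * vecMulVec w v).trace = v ⬝ᵥ A *ᵥ w := by
  simp [trace, Matrix.diag, mul_apply, vecMulVec_apply, dotProduct, mulVec,
    Finset.mul_sum]
  refine Finset.sum_congr rfl fun i _ => Finset.sum_congr rfl fun j _ => by ring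

lemma posSemidef_vecMulVec' {n : Type*} [Fintype n] (w : n → ℂ) :
    (vecMulVec w (star w)).PosSemidef := by
  apply PosSemidef.of_dotProduct_mulVec_nonneg
  · ext i j
    simp [vecMulVec_apply, conjTranspose_apply, mul_comm]
  · intro x
    rw [quad_vecMulVec]
    exact_mod_cast Complex.normSq_nonneg _

lemma posSemidef_smul_real {n : Type*} [Fintype n] {M : Matrix n n ℂ}
    (hM : M.PosSemidef) {c : ℝ} (hc : 0 ≤ c) : ((c : ℂ) • M).PosSemidef := by
  apply PosSemidef.of_dotProduct_mulVec_nonneg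
  · show ((c : ℂ) • M)ᴴ = _
    rw [conjTranspose_smul, Complex.star_def, Complex.conj_ofReal, hM.1.eq]
  · intro x
    rw [smul_mulVec, dotProduct_smul, smul_eq_mul]
    exact mul_nonneg (by exact_mod_cast hc) (hM.dotProduct_mulVec_nonneg x)

lemma rank_vecMulVec_self {n : Type*} [Fintype n] [DecidableEq n] {w : n → ℂ} (hw : w ≠ 0) :
    (vecMulVec w (star w)).rank = 1 := by
  have hww : (star w ⬝ᵥ w) ≠ 0 := fun h0 => hw (dotProduct_star_self_eq_zero.mp h0)
  have hrange : LinearMap.range (vecMulVec w (star w)).mulVecLin = ℂ ∙ w := by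
    apply le_antisymm
    · rintro _ ⟨x, rfl⟩
      rw [mulVecLin_apply, vecMulVec_mulVec']
      exact Submodule.smul_mem _ _ (Submodule.mem_span_singleton_self w)
    · rw [Submodule.span_singleton_le_iff_mem]
      refine ⟨(star w ⬝ᵥ w)⁻¹ • w, ?_⟩
      rw [mulVecLin_apply, Matrix.mulVec_smul, vecMulVec_mulVec', smul_smul,
        inv_mul_cancel₀ hww, one_smul]
  rw [Matrix.rank, hrange]
  exact finrank_span_singleton hw

lemma psd_rank_one {n : Type*} [Fintype n] [DecidableEq n] {W : Matrix n n ℂ}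
    (hW : W.PosSemidef) (hr : W.rank = 1) : ∃ w : n → ℂ, W = vecMulVec w (star w) := by
  have hH := hW.1
  have hcard : Fintype.card {i // hH.eigenvalues i ≠ 0} = 1 := by
    rw [← hH.rank_eq_card_non_zero_eigs, hr]
  obtain ⟨⟨i₀, hi₀⟩, huniq⟩ := Fintype.card_eq_one_iff.mp hcard
  have hzero : ∀ j, j ≠ i₀ → hH.eigenvalues j = 0 := by
    intro j hj
    by_contra hnz
    exact hj (congrArg Subtype.val (huniq ⟨j, hnz⟩))
  have hμpos : 0 ≤ hH.eigenvalues i₀ := hW.eigenvalues_nonneg i₀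
  set U : Matrix n n ℂ := (hH.eigenvectorUnitary : Matrix n n ℂ) with hU
  refine ⟨fun j => (Real.sqrt (hH.eigenvalues i₀) : ℂ) * U j i₀, ?_⟩
  have hspec := hH.spectral_theorem
  ext j k
  rw [vecMulVec_apply]
  conv_lhs => rw [hspec]
  rw [Unitary.conjStarAlgAut_apply]
  rw [mul_apply]
  have hterm : ∀ b, (U * diagonal ((RCLike.ofReal ∘ hH.eigenvalues : n → ℂ))) j b * (star U) b k
      = U j b * (hH.eigenvalues b : ℂ) * star (U k b) := by
    intro b
    rw [mul_diagonal]
    simp [Matrix.star_apply]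
  refine (Finset.sum_congr rfl fun b _ => hterm b).trans ?_
  rw [Finset.sum_eq_single i₀]
  · simp only [Pi.star_apply, star_mul', Complex.star_def, Complex.conj_ofReal]
    rw [← mul_assoc]
    congr 1
    rw [mul_comm ((Real.sqrt _ : ℂ)) (U j i₀), mul_assoc, ← Complex.ofReal_mul,
      Real.mul_self_sqrt hμpos, mul_comm]
  · intro b _ hb
    rw [hzero b hb]
    simp
  · intro hmem
    exact absurd (Finset.mem_univ i₀) hmem

lemma re_trace_mul_smul {n : Type*} [Fintype n] (A B : Matrix n n ℂ) (c : ℝ) :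
    (A * ((c : ℂ) • B)).trace.re = c * (A * B).trace.re := by
  rw [Matrix.mul_smul, trace_smul, smul_eq_mul, Complex.re_ofReal_mul]

lemma re_trace_smul {n : Type*} [Fintype n] (B : Matrix n n ℂ) (c : ℝ) :
    (((c : ℂ) • B).trace).re = c * B.trace.re := by
  rw [trace_smul, smul_eq_mul, Complex.re_ofReal_mul]

lemma re_quad_smul {n : Type*} [Fintype n] (B : Matrix n n ℂ) (x : n → ℂ) (c : ℝ) :
    (star x ⬝ᵥ ((c : ℂ) • B) *ᵥ x).re = c * (star x ⬝ᵥ B *ᵥ x).re := by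
  rw [smul_mulVec, dotProduct_smul, smul_eq_mul, Complex.re_ofReal_mul]

lemma smul_vecMulVec {n : Type*} [Fintype n] (w : n → ℂ) {c : ℝ} (hc : 0 ≤ c) :
    (c : ℂ) • vecMulVec w (star w)
      = vecMulVec (((Real.sqrt c : ℝ) : ℂ) • w) (star (((Real.sqrt c : ℝ) : ℂ) • w)) := by
  ext i j
  simp only [Matrix.smul_apply, vecMulVec_apply, Pi.star_apply, Pi.smul_apply, smul_eq_mul,
    star_mul', Complex.star_def, Complex.conj_ofReal]
  have : ((Real.sqrt c : ℝ) : ℂ) * ((Real.sqrt c : ℝ) : ℂ) = (c : ℂ) := by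
    rw [← Complex.ofReal_mul, Real.mul_self_sqrt hc]
  rw [← this]
  ring

lemma re_quad_vecMulVec {n : Type*} [Fintype n] (w x : n → ℂ) :
    (star x ⬝ᵥ vecMulVec w (star w) *ᵥ x).re = ‖star x ⬝ᵥ w‖ ^ 2 := by
  rw [quad_vecMulVec, Complex.ofReal_re, Complex.sq_norm]

lemma re_trace_mul_vecMulVec {n : Type*} [Fintype n] (A : Matrix n n ℂ) (w : n → ℂ) :
    (A * vecMulVec w (star w)).trace.re = (star w ⬝ᵥ A *ᵥ w).re := by
  rw [trace_mul_vecMulVec]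

lemma re_trace_vecMulVec {n : Type*} [Fintype n] (w : n → ℂ) :
    (vecMulVec w (star w)).trace.re = (star w ⬝ᵥ w).re := by
  rw [trace_vecMulVec']

lemma re_nonneg_of_psd {n : Type*} [Fintype n] {M : Matrix n n ℂ} (hM : M.PosSemidef)
    (x : n → ℂ) : 0 ≤ (star x ⬝ᵥ M *ᵥ x).re := by
  have := hM.dotProduct_mulVec_nonneg x
  rw [Complex.le_def] at this
  simpa using this.1

lemma trace_re_nonneg_of_psd {n : Type*} [Fintype n] [DecidableEq n] {M : Matrix n n ℂ} (hM : M.PosSemidef) :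
    0 ≤ M.trace.re := by
  rw [trace, Complex.re_sum]
  refine Finset.sum_nonneg fun i _ => ?_
  have := re_nonneg_of_psd hM (Pi.single i 1)
  simpa [dotProduct, mulVec, Pi.single_apply, Matrix.diag] using this

lemma re_dot_self_pos {n : Type*} [Fintype n] {w : n → ℂ} (hw : w ≠ 0) :
    0 < (star w ⬝ᵥ w).re := by
  have : (0:ℂ) < star w ⬝ᵥ w := dotProduct_star_self_pos_iff.mpr hw
  rw [Complex.lt_def] at this
  simpa using this.1


/-- The original feasible set `F`: pairs `(w, V)` with `V` Hermitian PSD satisfying the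
SINR constraint C1 of the desired receiver, the robust eavesdropper constraints C2 and C3,
and the power constraint C4. -/
def FeasOrig {NT K J : ℕ} (h : Fin NT → ℂ)
    (ghat : Fin (K - 1) → Fin NT → ℂ) (lhat : Fin J → Fin NT → ℂ)
    (Γreq σz2 Pmax σPU2 : ℝ) (Γtol σzk2 ε : Fin (K - 1) → ℝ) (ΓtolPU υ : Fin J → ℝ)
    (w : Fin NT → ℂ) (V : Matrix (Fin NT) (Fin NT) ℂ) : Prop :=
  V.PosSemidef ∧
  Γreq * ((Matrix.vecMulVec h (star h) * V).trace.re + σz2) ≤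
      (star w ⬝ᵥ Matrix.vecMulVec h (star h) *ᵥ w).re ∧
  (∀ k, ∀ Δg : Fin NT → ℂ, (star Δg ⬝ᵥ Δg).re ≤ ε k ^ 2 →
      ‖star (ghat k + Δg) ⬝ᵥ w‖ ^ 2 ≤
        Γtol k * ((star (ghat k + Δg) ⬝ᵥ V *ᵥ (ghat k + Δg)).re + σzk2 k)) ∧
  (∀ j, ∀ Δl : Fin NT → ℂ, (star Δl ⬝ᵥ Δl).re ≤ υ j ^ 2 →
      ‖star (lhat j + Δl) ⬝ᵥ w‖ ^ 2 ≤
        ΓtolPU j * ((star (lhat j + Δl) ⬝ᵥ V *ᵥ (lhat j + Δl)).re + σPU2)) ∧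
  (star w ⬝ᵥ w).re + V.trace.re ≤ Pmax

/-- The Charnes–Cooper transformed feasible set `F'`: triples `(W̄, V̄, ξ)` with `W̄, V̄`
Hermitian PSD, `ξ ≥ 0`, `rank W̄ = 1`, the transformed constraints, the transformed power
constraint, and the normalization `Tr(W̄) + Tr(V̄) = 1`. -/
def FeasTrans {NT K J : ℕ} (h : Fin NT → ℂ)
    (ghat : Fin (K - 1) → Fin NT → ℂ) (lhat : Fin J → Fin NT → ℂ)
    (Γreq σz2 Pmax σPU2 : ℝ) (Γtol σzk2 ε : Fin (K - 1) → ℝ) (ΓtolPU υ : Fin J → ℝ)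
    (Wb Vb : Matrix (Fin NT) (Fin NT) ℂ) (ξ : ℝ) : Prop :=
  Wb.PosSemidef ∧ Vb.PosSemidef ∧ 0 ≤ ξ ∧ Wb.rank = 1 ∧
  Γreq * ((Matrix.vecMulVec h (star h) * Vb).trace.re + σz2 * ξ) ≤
      (Matrix.vecMulVec h (star h) * Wb).trace.re ∧
  (∀ k, ∀ Δg : Fin NT → ℂ, (star Δg ⬝ᵥ Δg).re ≤ ε k ^ 2 →
      (star (ghat k + Δg) ⬝ᵥ Wb *ᵥ (ghat k + Δg)).re ≤
        Γtol k * ((star (ghat k + Δg) ⬝ᵥ Vb *ᵥ (ghat k + Δg)).re + σzk2 k * ξ)) ∧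
  (∀ j, ∀ Δl : Fin NT → ℂ, (star Δl ⬝ᵥ Δl).re ≤ υ j ^ 2 →
      (star (lhat j + Δl) ⬝ᵥ Wb *ᵥ (lhat j + Δl)).re ≤
        ΓtolPU j * ((star (lhat j + Δl) ⬝ᵥ Vb *ᵥ (lhat j + Δl)).re + σPU2 * ξ)) ∧
  Wb.trace.re + Vb.trace.re ≤ Pmax * ξ ∧
  Wb.trace.re + Vb.trace.re = 1

/-- The worst-case total harvested power of the matrix `M` (here `M = w wᴴ + V` or
`M = W̄ + V̄`) over all admissible channel uncertainties. -/
noncomputable def WHP {NT K : ℕ} (ghat : Fin (K - 1) → Fin NT → ℂ)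
    (ε η : Fin (K - 1) → ℝ) (M : Matrix (Fin NT) (Fin NT) ℂ) : ℝ :=
  sInf {t : ℝ | ∃ Δg : Fin (K - 1) → Fin NT → ℂ,
    (∀ k, (star (Δg k) ⬝ᵥ Δg k).re ≤ ε k ^ 2) ∧
    t = ∑ k, η k * (star (ghat k + Δg k) ⬝ᵥ M *ᵥ (ghat k + Δg k)).re}


lemma WHP_smul {NT K : ℕ} (ghat : Fin (K - 1) → Fin NT → ℂ)
    (ε η : Fin (K - 1) → ℝ) (M : Matrix (Fin NT) (Fin NT) ℂ) {c : ℝ} (hc : 0 ≤ c) :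
    WHP ghat ε η ((c : ℂ) • M) = c * WHP ghat ε η M := by
  have hset : {t : ℝ | ∃ Δg : Fin (K - 1) → Fin NT → ℂ,
      (∀ k, (star (Δg k) ⬝ᵥ Δg k).re ≤ ε k ^ 2) ∧
      t = ∑ k, η k * (star (ghat k + Δg k) ⬝ᵥ ((c : ℂ) • M) *ᵥ (ghat k + Δg k)).re}
      = c • {t : ℝ | ∃ Δg : Fin (K - 1) → Fin NT → ℂ,
      (∀ k, (star (Δg k) ⬝ᵥ Δg k).re ≤ ε k ^ 2) ∧
      t = ∑ k, η k * (star (ghat k + Δg k) ⬝ᵥ M *ᵥ (ghat k + Δg k)).re} := by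
    ext t
    simp only [Set.mem_smul_set, Set.mem_setOf_eq]
    constructor
    · rintro ⟨Δg, hΔ, rfl⟩
      refine ⟨∑ k, η k * (star (ghat k + Δg k) ⬝ᵥ M *ᵥ (ghat k + Δg k)).re, ⟨Δg, hΔ, rfl⟩, ?_⟩
      rw [smul_eq_mul, Finset.mul_sum]
      refine Finset.sum_congr rfl fun k _ => ?_
      rw [re_quad_smul]
      ring
    · rintro ⟨x, ⟨Δg, hΔ, rfl⟩, rfl⟩
      refine ⟨Δg, hΔ, ?_⟩
      rw [smul_eq_mul, Finset.mul_sum]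
      refine Finset.sum_congr rfl fun k _ => ?_
      rw [re_quad_smul]
      ring
  rw [WHP, WHP, hset, Real.sInf_smul_of_nonneg hc, smul_eq_mul]

/-- Equivalence of the worst-case energy harvesting efficiency maximization problem and
its Charnes–Cooper transformed version: the optimal values coincide, and every feasible
`(w, V)` yields a feasible transformed point with the same objective value. -/
theorem harvesting_eff_equiv {NT K J : ℕ} (hNT : 1 ≤ NT) (h : Fin NT → ℂ)
    (ghat : Fin (K - 1) → Fin NT → ℂ) (lhat : Fin J → Fin NT → ℂ)
    (Γreq σz2 Pmax σPU2 : ℝ) (Γtol σzk2 ε : Fin (K - 1) → ℝ) (ΓtolPU υ : Fin J → ℝ)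
    (η : Fin (K - 1) → ℝ) (hη : ∀ k, 0 ≤ η k)
    (hΓreq : 0 < Γreq) (hσz : 0 < σz2) (hPmax : 0 < Pmax) (hσPU : 0 < σPU2)
    (hΓtol : ∀ k, 0 < Γtol k) (hσzk : ∀ k, 0 < σzk2 k) (hε : ∀ k, 0 < ε k)
    (hΓPU : ∀ j, 0 < ΓtolPU j) (hυ : ∀ j, 0 < υ j) :
    (sSup {t : ℝ | ∃ w V, FeasOrig h ghat lhat Γreq σz2 Pmax σPU2 Γtol σzk2 ε ΓtolPU υ w V ∧
          t = WHP ghat ε η (Matrix.vecMulVec w (star w) + V) /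
              ((star w ⬝ᵥ w).re + V.trace.re)} =
      sSup {t : ℝ | ∃ Wb Vb ξ,
          FeasTrans h ghat lhat Γreq σz2 Pmax σPU2 Γtol σzk2 ε ΓtolPU υ Wb Vb ξ ∧
          t = WHP ghat ε η (Wb + Vb)}) ∧
    (∀ w V, FeasOrig h ghat lhat Γreq σz2 Pmax σPU2 Γtol σzk2 ε ΓtolPU υ w V →
        FeasTrans h ghat lhat Γreq σz2 Pmax σPU2 Γtol σzk2 ε ΓtolPU υ
          ((((star w ⬝ᵥ w).re + V.trace.re)⁻¹ : ℂ) • Matrix.vecMulVec w (star w))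
          ((((star w ⬝ᵥ w).re + V.trace.re)⁻¹ : ℂ) • V)
          (((star w ⬝ᵥ w).re + V.trace.re)⁻¹) ∧
        WHP ghat ε η (Matrix.vecMulVec w (star w) + V) /
            ((star w ⬝ᵥ w).re + V.trace.re) =
          WHP ghat ε η
            ((((star w ⬝ᵥ w).re + V.trace.re)⁻¹ : ℂ) • Matrix.vecMulVec w (star w) +
              (((star w ⬝ᵥ w).re + V.trace.re)⁻¹ : ℂ) • V)) := by
  classical
  set H : Matrix (Fin NT) (Fin NT) ℂ := Matrix.vecMulVec h (star h) with hH
  -- forward key lemma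
  have key : ∀ w V, FeasOrig h ghat lhat Γreq σz2 Pmax σPU2 Γtol σzk2 ε ΓtolPU υ w V →
      FeasTrans h ghat lhat Γreq σz2 Pmax σPU2 Γtol σzk2 ε ΓtolPU υ
        ((((star w ⬝ᵥ w).re + V.trace.re)⁻¹ : ℂ) • Matrix.vecMulVec w (star w))
        ((((star w ⬝ᵥ w).re + V.trace.re)⁻¹ : ℂ) • V)
        (((star w ⬝ᵥ w).re + V.trace.re)⁻¹) ∧
      WHP ghat ε η (Matrix.vecMulVec w (star w) + V) /
          ((star w ⬝ᵥ w).re + V.trace.re) =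
        WHP ghat ε η
          ((((star w ⬝ᵥ w).re + V.trace.re)⁻¹ : ℂ) • Matrix.vecMulVec w (star w) +
            (((star w ⬝ᵥ w).re + V.trace.re)⁻¹ : ℂ) • V) := by
    intro w V hF
    obtain ⟨hV, hC1, hC2, hC3, hC4⟩ := hF
    have hTrHV : 0 ≤ (H * V).trace.re := by
      rw [trace_mul_comm, trace_mul_vecMulVec]
      exact re_nonneg_of_psd hV h
    have hw0 : w ≠ 0 := by
      intro h0
      rw [h0] at hC1
      simp only [star_zero, zero_dotProduct, Complex.zero_re] at hC1
      nlinarith [hTrHV]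
    set s : ℝ := (star w ⬝ᵥ w).re + V.trace.re with hs_def
    have hs : 0 < s := add_pos_of_pos_of_nonneg (re_dot_self_pos hw0)
      (trace_re_nonneg_of_psd hV)
    have hξ : 0 < s⁻¹ := inv_pos.mpr hs
    have hcast : ((((star w ⬝ᵥ w).re : ℝ) : ℂ) + ((V.trace.re : ℝ) : ℂ))⁻¹
        = ((s⁻¹ : ℝ) : ℂ) := by
      rw [hs_def]; push_cast; ring
    constructor
    · refine ⟨?_, ?_, hξ.le, ?_, ?_, ?_, ?_, ?_, ?_⟩
      · rw [hcast]
        exact posSemidef_smul_real (posSemidef_vecMulVec' w) hξ.le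
      · rw [hcast]
        exact posSemidef_smul_real hV hξ.le
      · rw [hcast, smul_vecMulVec w hξ.le]
        refine rank_vecMulVec_self (smul_ne_zero ?_ hw0)
        exact_mod_cast Complex.ofReal_ne_zero.mpr
          (ne_of_gt (Real.sqrt_pos.mpr hξ))
      · rw [hcast, re_trace_mul_smul, re_trace_mul_smul, re_trace_mul_vecMulVec]
        nlinarith [hC1]
      · intro k Δg hΔ
        rw [hcast, re_quad_smul, re_quad_smul, re_quad_vecMulVec]
        nlinarith [mul_le_mul_of_nonneg_left (hC2 k Δg hΔ) hξ.le]
      · intro j Δl hΔ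
        rw [hcast, re_quad_smul, re_quad_smul, re_quad_vecMulVec]
        nlinarith [mul_le_mul_of_nonneg_left (hC3 j Δl hΔ) hξ.le]
      · rw [hcast, re_trace_smul, re_trace_smul, re_trace_vecMulVec, ← mul_add,
          inv_mul_cancel₀ hs.ne']
        calc (1:ℝ) = s * s⁻¹ := (mul_inv_cancel₀ hs.ne').symm
          _ ≤ Pmax * s⁻¹ := mul_le_mul_of_nonneg_right hC4 hξ.le
      · rw [hcast, re_trace_smul, re_trace_smul, re_trace_vecMulVec, ← mul_add,
          inv_mul_cancel₀ hs.ne']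
    · rw [hcast, ← smul_add, WHP_smul ghat ε η _ hξ.le, div_eq_inv_mul]
  refine ⟨?_, key⟩
  apply congrArg sSup
  ext t
  simp only [Set.mem_setOf_eq]
  constructor
  · rintro ⟨w, V, hF, rfl⟩
    obtain ⟨hFT, heq⟩ := key w V hF
    exact ⟨_, _, _, hFT, heq⟩
  · rintro ⟨Wb, Vb, ξ, ⟨hWb, hVb, hξ0, hrank, hC1, hC2, hC3, hpow, hnorm⟩, rfl⟩
    have hξpos : 0 < ξ := by
      rcases lt_or_eq_of_le hξ0 with hlt | heq
      · exact hlt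
      · exfalso
        rw [← heq, mul_zero] at hpow
        nlinarith [hnorm]
    set c : ℝ := ξ⁻¹ with hc_def
    have hc : 0 ≤ c := (inv_pos.mpr hξpos).le
    have hcpos : 0 < c := inv_pos.mpr hξpos
    have hcξ : c * ξ = 1 := inv_mul_cancel₀ hξpos.ne'
    obtain ⟨u, hu⟩ := psd_rank_one hWb hrank
    set w : Fin NT → ℂ := ((Real.sqrt c : ℝ) : ℂ) • u with hw_def
    set V : Matrix (Fin NT) (Fin NT) ℂ := ((c : ℝ) : ℂ) • Vb with hV_def
    have hww : Matrix.vecMulVec w (star w) = ((c : ℝ) : ℂ) • Wb := by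
      rw [hu, smul_vecMulVec u hc]
    have hdot : (star w ⬝ᵥ w).re = c * Wb.trace.re := by
      rw [← re_trace_vecMulVec, hww, re_trace_smul]
    have hTrV : V.trace.re = c * Vb.trace.re := by
      rw [hV_def, re_trace_smul]
    have hden : (star w ⬝ᵥ w).re + V.trace.re = c := by
      rw [hdot, hTrV, ← mul_add, hnorm, mul_one]
    have hF : FeasOrig h ghat lhat Γreq σz2 Pmax σPU2 Γtol σzk2 ε ΓtolPU υ w V := by
      refine ⟨posSemidef_smul_real hVb hc, ?_, ?_, ?_, ?_⟩
      · have hquad : (star w ⬝ᵥ H *ᵥ w).re = c * (H * Wb).trace.re := by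
          rw [← re_trace_mul_vecMulVec, hww, re_trace_mul_smul]
        rw [hquad, hV_def, re_trace_mul_smul]
        have h1 := mul_le_mul_of_nonneg_left hC1 hc
        have e : c * (Γreq * ((vecMulVec h (star h) * Vb).trace.re + σz2 * ξ))
            = Γreq * (c * (vecMulVec h (star h) * Vb).trace.re + σz2) := by
          linear_combination Γreq * σz2 * hcξ
        linarith [h1, e.symm.le, e.le]
      · intro k Δg hΔ
        have hquad : ‖star (ghat k + Δg) ⬝ᵥ w‖ ^ 2
            = c * (star (ghat k + Δg) ⬝ᵥ Wb *ᵥ (ghat k + Δg)).re := by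
          rw [← re_quad_vecMulVec, hww, re_quad_smul]
        rw [hquad, hV_def, re_quad_smul]
        have h1 := mul_le_mul_of_nonneg_left (hC2 k Δg hΔ) hc
        have e : c * (Γtol k * ((star (ghat k + Δg) ⬝ᵥ Vb *ᵥ (ghat k + Δg)).re + σzk2 k * ξ))
            = Γtol k * (c * (star (ghat k + Δg) ⬝ᵥ Vb *ᵥ (ghat k + Δg)).re + σzk2 k) := by
          linear_combination Γtol k * σzk2 k * hcξ
        linarith [h1, e.le, e.symm.le]
      · intro j Δl hΔ
        have hquad : ‖star (lhat j + Δl) ⬝ᵥ w‖ ^ 2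
            = c * (star (lhat j + Δl) ⬝ᵥ Wb *ᵥ (lhat j + Δl)).re := by
          rw [← re_quad_vecMulVec, hww, re_quad_smul]
        rw [hquad, hV_def, re_quad_smul]
        have h1 := mul_le_mul_of_nonneg_left (hC3 j Δl hΔ) hc
        have e : c * (ΓtolPU j * ((star (lhat j + Δl) ⬝ᵥ Vb *ᵥ (lhat j + Δl)).re + σPU2 * ξ))
            = ΓtolPU j * (c * (star (lhat j + Δl) ⬝ᵥ Vb *ᵥ (lhat j + Δl)).re + σPU2) := by
          linear_combination ΓtolPU j * σPU2 * hcξ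
        linarith [h1, e.le, e.symm.le]
      · rw [hden]
        have h1 : (1:ℝ) ≤ Pmax * ξ := by linarith [hpow, hnorm.le, hnorm.ge]
        have h2 := mul_le_mul_of_nonneg_left h1 hc
        have e : c * (Pmax * ξ) = Pmax := by linear_combination Pmax * hcξ
        linarith [h2, e.le, e.symm.le]
    refine ⟨w, V, hF, ?_⟩
    rw [hden, hV_def, hww, ← smul_add, WHP_smul ghat ε η _ hc,
      mul_div_cancel_left₀ _ hcpos.ne']
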